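/- Let k be a field of characteristic 2 and m ≥ 1 an integer. In the polynomial ring P := k[y_{ij} (1 ≤ i,j ≤ 2m), x₁, …, x_{2m}], write Y for the 2m×2m matrix (y_{ij}), x for the row (x₁,…,x_{2m}), set α := Σ_{i=1}^m y_{i, 2m+1−i}, and let M be the 2m×2m matrix with entries M_{ij} := α·y_{ij} + x_i·x_j. Let J₁ ⊆ P be the ideal generated by all 2×2 minors of the (2m+1)×2m matrix obtained by stacking Y on top of the row x, all entries of Y − Yᵗ, and the diagonal entries M_{11}, …, M_{2m,2m} of M; let J₂ ⊆ P be the ideal generated by the same minors, the entries of Y − Yᵗ, and all entries M_{ij} of M. Then J₁ ⊆ J₂, every M_{ij} satisfies M_{ij}² ∈ J₁, and consequently the radicals of J₁ and J₂ coincide. -/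

import Mathlib

open MvPolynomial

namespace Stmt7

variable (k : Type*) [CommRing k] (m : ℕ)

/-- The polynomial ring `P = k[y_{ij} (1 ≤ i,j ≤ 2m), x₁, …, x_{2m}]`. -/
abbrev P := MvPolynomial ((Fin (2 * m) × Fin (2 * m)) ⊕ Fin (2 * m)) k

/-- The matrix of variables `Y = (y_{ij})`. -/
noncomputable def Y : Matrix (Fin (2 * m)) (Fin (2 * m)) (P k m) :=
  Matrix.of fun i j => X (Sum.inl (i, j))

/-- The row of variables `x = (x₁, …, x_{2m})`. -/
noncomputable def x : Fin (2 * m) → P k m := fun i => X (Sum.inr i)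

/-- The `(2m+1) × 2m` matrix obtained by stacking `Y` on top of the row `x`. -/
noncomputable def stacked : Matrix (Fin (2 * m + 1)) (Fin (2 * m)) (P k m) :=
  Matrix.of fun i j =>
    if h : (i : ℕ) < 2 * m then Y k m ⟨(i : ℕ), h⟩ j else x k m j

/-- The set of `2 × 2` minors of the stacked matrix. -/
def minors : Set (P k m) :=
  {r | ∃ (a b : Fin (2 * m + 1)) (c d : Fin (2 * m)),
    r = stacked k m a c * stacked k m b d - stacked k m a d * stacked k m b c}

/-- `α = Σ_{i=1}^m y_{i, 2m+1−i}` (in zero-based indexing: `Σ_{i=0}^{m−1} y_{i, 2m−1−i}`). -/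
noncomputable def alpha : P k m :=
  ∑ i : Fin m, Y k m (Fin.castLE (by omega) i) (Fin.rev (Fin.castLE (by omega) i))

/-- The matrix `M` with `M_{ij} = α·y_{ij} + x_i·x_j`. -/
noncomputable def Mmat : Matrix (Fin (2 * m)) (Fin (2 * m)) (P k m) :=
  Matrix.of fun i j => alpha k m * Y k m i j + x k m i * x k m j

/-- The ideal `J₁`, generated by the `2 × 2` minors of the stacked matrix, the entries of
`Y − Yᵀ`, and the diagonal entries of `M`. -/
noncomputable def J1 : Ideal (P k m) :=
  Ideal.span (minors k m ∪
    {r | ∃ i j : Fin (2 * m), r = Y k m i j - Y k m j i} ∪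
    {r | ∃ i : Fin (2 * m), r = Mmat k m i i})

/-- The ideal `J₂`, generated by the `2 × 2` minors of the stacked matrix, the entries of
`Y − Yᵀ`, and all entries of `M`. -/
noncomputable def J2 : Ideal (P k m) :=
  Ideal.span (minors k m ∪
    {r | ∃ i j : Fin (2 * m), r = Y k m i j - Y k m j i} ∪
    {r | ∃ i j : Fin (2 * m), r = Mmat k m i j})

end Stmt7

namespace Stmt7

variable {k : Type*} [CommRing k] {m : ℕ}

lemma stacked_castSucc (a : Fin (2 * m)) (c : Fin (2 * m)) :
    stacked k m (Fin.castSucc a) c = Y k m a c := by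
  simp only [stacked, Matrix.of_apply]
  rw [dif_pos (by simpa using a.isLt)]
  congr 1

lemma stacked_last (c : Fin (2 * m)) :
    stacked k m (Fin.last (2 * m)) c = x k m c := by
  simp only [stacked, Matrix.of_apply]
  rw [dif_neg (by simp)]

lemma minorY_mem (a b c d : Fin (2 * m)) :
    Y k m a c * Y k m b d - Y k m a d * Y k m b c ∈ J1 k m :=
  Ideal.subset_span (Or.inl (Or.inl
    ⟨Fin.castSucc a, Fin.castSucc b, c, d, by simp [stacked_castSucc]⟩))

lemma minorYx_mem (a c d : Fin (2 * m)) :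
    Y k m a c * x k m d - Y k m a d * x k m c ∈ J1 k m :=
  Ideal.subset_span (Or.inl (Or.inl
    ⟨Fin.castSucc a, Fin.last (2 * m), c, d, by
      simp [stacked_castSucc, stacked_last]⟩))

lemma sym_mem (i j : Fin (2 * m)) :
    Y k m i j - Y k m j i ∈ J1 k m :=
  Ideal.subset_span (Or.inl (Or.inr ⟨i, j, rfl⟩))

lemma diag_mem (i : Fin (2 * m)) : Mmat k m i i ∈ J1 k m :=
  Ideal.subset_span (Or.inr ⟨i, rfl⟩)

lemma key_identity (i j : Fin (2 * m)) :
    Mmat k m i j ^ 2 =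
      Mmat k m i i * Mmat k m j j
      + (alpha k m ^ 2 * Y k m i j + alpha k m * x k m i * x k m j)
          * (Y k m i j - Y k m j i)
      - alpha k m ^ 2 * (Y k m i i * Y k m j j - Y k m i j * Y k m j i)
      - alpha k m * x k m j * (Y k m i i * x k m j - Y k m i j * x k m i)
      - alpha k m * x k m i * (Y k m j j * x k m i - Y k m j i * x k m j) := by
  simp only [Mmat, Matrix.of_apply]
  ring

lemma sq_mem (i j : Fin (2 * m)) : Mmat k m i j ^ 2 ∈ J1 k m := by
  rw [key_identity i j]
  refine sub_mem (sub_mem (sub_mem (add_mem ?_ ?_) ?_) ?_) ?_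
  · exact Ideal.mul_mem_right _ _ (diag_mem i)
  · exact Ideal.mul_mem_left _ _ (sym_mem i j)
  · exact Ideal.mul_mem_left _ _ (minorY_mem i j i j)
  · exact Ideal.mul_mem_left _ _ (minorYx_mem i i j)
  · exact Ideal.mul_mem_left _ _ (minorYx_mem j j i)

lemma J1_le_J2 : J1 k m ≤ J2 k m := by
  apply Ideal.span_mono
  rintro r ((h | h) | ⟨i, rfl⟩)
  · exact Or.inl (Or.inl h)
  · exact Or.inl (Or.inr h)
  · exact Or.inr ⟨i, i, rfl⟩

end Stmt7


/-- Let `k` be a field of characteristic `2` and `m ≥ 1`.  In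
`P = k[y_{ij}, x_i]`, with `α = Σ_{i=1}^m y_{i,2m+1−i}` and `M_{ij} = α y_{ij} + x_i x_j`, let
`J₁` be the ideal generated by the `2 × 2` minors of the `(2m+1) × 2m` matrix stacking `Y` over
the row `x`, the entries of `Y − Yᵀ`, and the diagonal entries of `M`; and let `J₂` be generated
by the same minors, the entries of `Y − Yᵀ`, and all entries of `M`.  Then `J₁ ⊆ J₂`, every
`M_{ij}` satisfies `M_{ij}² ∈ J₁`, and consequently `J₁` and `J₂` have the same radical. -/
theorem stmt_7 (k : Type*) [Field k] [CharP k 2] (m : ℕ) (hm : 1 ≤ m) :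
    Stmt7.J1 k m ≤ Stmt7.J2 k m ∧
    (∀ i j : Fin (2 * m), Stmt7.Mmat k m i j ^ 2 ∈ Stmt7.J1 k m) ∧
    (Stmt7.J1 k m).radical = (Stmt7.J2 k m).radical := by
  refine ⟨Stmt7.J1_le_J2, fun i j => Stmt7.sq_mem i j, le_antisymm (Ideal.radical_mono Stmt7.J1_le_J2) ?_⟩
  have h2 : Stmt7.J2 k m ≤ (Stmt7.J1 k m).radical := by
    rw [Stmt7.J2, Ideal.span_le]
    rintro r ((h | h) | ⟨i, j, rfl⟩)
    · exact Ideal.le_radical (Ideal.subset_span (Or.inl (Or.inl h)))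
    · exact Ideal.le_radical (Ideal.subset_span (Or.inl (Or.inr h)))
    · exact ⟨2, Stmt7.sq_mem i j⟩
  calc (Stmt7.J2 k m).radical ≤ (Stmt7.J1 k m).radical.radical := Ideal.radical_mono h2
    _ = (Stmt7.J1 k m).radical := (Stmt7.J1 k m).radical_idem
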